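/- arXiv:2308.07641 — 7 statements merged into one kernel-verified Lean document; each statement's English description precedes it below -/
import Mathlib

section
/- For any unit vector $a \in \mathbb{S}^{N-1}$, there exists a ternary vector $t \in \{-1,0,1\}^N$ with $t \neq 0$ such that $\frac{\langle a, t\rangle}{\sqrt{\|t\|_0}} \geq \gamma_N$, where $\|t\|_0$ denotes the number of nonzero entries of $t$ and $\gamma_N = \left(\sum_{k=1}^{N}(\sqrt{k}-\sqrt{k-1})^2\right)^{-1/2}$. -/
open Finset
open scoped Classical

noncomputable def gamma (N : ℕ) : ℝ :=
  1 / Real.sqrt (∑ k ∈ Finset.range N, (Real.sqrt (k + 1) - Real.sqrt k) ^ 2)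

lemma abel1 (b c : ℕ → ℝ) (N : ℕ) :
    ∑ k ∈ range N, (b k - b (k+1)) * c (k+1)
      = ∑ k ∈ range N, b k * (c (k+1) - c k) + b 0 * c 0 - b N * c N := by
  induction N with
  | zero => simp
  | succ n ih => rw [Finset.sum_range_succ, Finset.sum_range_succ, ih]; ring

lemma gamma_pos (N : ℕ) (hN : 1 ≤ N) : 0 < gamma N ∧
    gamma N * Real.sqrt (∑ k ∈ Finset.range N, (Real.sqrt (k + 1) - Real.sqrt k) ^ 2) = 1 := by
  have hQ : (0:ℝ) < ∑ k ∈ Finset.range N, (Real.sqrt (k + 1) - Real.sqrt k) ^ 2 := by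
    apply Finset.sum_pos' (fun i _ => sq_nonneg _) ⟨0, Finset.mem_range.2 hN, by norm_num⟩
  have h2 : 0 < Real.sqrt (∑ k ∈ Finset.range N, (Real.sqrt (k + 1) - Real.sqrt k) ^ 2) :=
    Real.sqrt_pos.2 hQ
  constructor
  · exact div_pos one_pos h2
  · rw [gamma, one_div, inv_mul_cancel₀ h2.ne']

lemma key (N : ℕ) (hN : 1 ≤ N) (b : ℕ → ℝ) (hnn : ∀ i, 0 ≤ b i)
    (hmono : ∀ i j, i ≤ j → b j ≤ b i) (hzero : ∀ i, N ≤ i → b i = 0)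
    (hsum : ∑ i ∈ range N, b i ^ 2 = 1) :
    ∃ k ∈ range N, gamma N * Real.sqrt (k+1) ≤ ∑ j ∈ range (k+1), b j := by
  by_contra hcon
  push_neg at hcon
  set S : ℕ → ℝ := fun m => ∑ j ∈ range m, b j with hS
  set γ := gamma N
  obtain ⟨hγpos, hγQ⟩ := gamma_pos N hN
  -- identity 1
  have hbN : b N = 0 := hzero N le_rfl
  have id1 : ∑ k ∈ range N, b k ^ 2 = ∑ k ∈ range N, (b k - b (k+1)) * S (k+1) := by
    rw [abel1 b S N]
    simp only [hS, hbN]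
    rw [show (∑ j ∈ range 0, b j) = 0 from rfl]
    have : ∀ k ∈ range N, b k * ((∑ j ∈ range (k+1), b j) - ∑ j ∈ range k, b j) = b k ^ 2 := by
      intro k _; rw [Finset.sum_range_succ]; ring
    rw [Finset.sum_congr rfl this]; ring
  -- identity 2
  have id2 : ∑ k ∈ range N, (b k - b (k+1)) * Real.sqrt (k+1)
      = ∑ k ∈ range N, b k * (Real.sqrt (k+1) - Real.sqrt k) := by
    have := abel1 b (fun k => Real.sqrt k) N
    simp only [hbN, Nat.cast_zero, Real.sqrt_zero, mul_zero, zero_mul, add_zero, sub_zero] at this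
    exact_mod_cast this
  -- b 0 > 0
  have hb0 : 0 < b 0 := by
    rcases lt_or_eq_of_le (hnn 0) with h | h
    · exact h
    · exfalso
      have : ∀ i ∈ range N, b i ^ 2 = 0 := by
        intro i _
        have := hmono 0 i (Nat.zero_le i)
        have : b i = 0 := le_antisymm (h ▸ this) (hnn i)
        simp [this]
      rw [Finset.sum_congr rfl this] at hsum; simp at hsum
  -- strict inequality step
  have step : ∑ k ∈ range N, (b k - b (k+1)) * S (k+1)
      < ∑ k ∈ range N, (b k - b (k+1)) * (γ * Real.sqrt (k+1)) := by
    apply Finset.sum_lt_sum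
    · intro k hk
      have hd : 0 ≤ b k - b (k+1) := sub_nonneg.2 (hmono k (k+1) (Nat.le_succ k))
      exact mul_le_mul_of_nonneg_left (le_of_lt (by
        have := hcon k hk
        simpa [mul_comm] using this)) hd
    · -- exists k with b k - b (k+1) > 0
      have hsum_tel : ∑ k ∈ range N, (b k - b (k+1)) = b 0 - b N := by
        rw [Finset.sum_range_sub' b N]
      have : ∃ k ∈ range N, 0 < b k - b (k+1) := by
        by_contra h
        push_neg at h
        have : ∑ k ∈ range N, (b k - b (k+1)) ≤ 0 := Finset.sum_nonpos h
        rw [hsum_tel, hbN, sub_zero] at this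
        linarith
      obtain ⟨k, hk, hpos⟩ := this
      refine ⟨k, hk, ?_⟩
      exact mul_lt_mul_of_pos_left (by simpa [mul_comm] using hcon k hk) hpos
  -- Cauchy-Schwarz
  have CS : ∑ k ∈ range N, b k * (Real.sqrt (k+1) - Real.sqrt k)
      ≤ Real.sqrt (∑ k ∈ range N, (Real.sqrt (k + 1) - Real.sqrt k) ^ 2) := by
    have h1 := Finset.sum_mul_sq_le_sq_mul_sq (range N) b (fun k => Real.sqrt (k+1) - Real.sqrt k)
    have h2 : (∑ k ∈ range N, b k * (Real.sqrt (k+1) - Real.sqrt k)) ^ 2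
        ≤ ∑ k ∈ range N, (Real.sqrt (k + 1) - Real.sqrt k) ^ 2 := by
      calc _ ≤ (∑ i ∈ range N, b i ^ 2) * ∑ k ∈ range N, (Real.sqrt (k + 1) - Real.sqrt k) ^ 2 := by
              exact_mod_cast h1
        _ = _ := by rw [hsum, one_mul]
    calc ∑ k ∈ range N, b k * (Real.sqrt (k+1) - Real.sqrt k)
        ≤ |∑ k ∈ range N, b k * (Real.sqrt (k+1) - Real.sqrt k)| := le_abs_self _
      _ = Real.sqrt ((∑ k ∈ range N, b k * (Real.sqrt (k+1) - Real.sqrt k))^2) := by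
              rw [Real.sqrt_sq_eq_abs]
      _ ≤ _ := Real.sqrt_le_sqrt h2
  have final : (1:ℝ) < 1 := by
    calc (1:ℝ) = ∑ k ∈ range N, b k ^ 2 := hsum.symm
      _ = ∑ k ∈ range N, (b k - b (k+1)) * S (k+1) := id1
      _ < ∑ k ∈ range N, (b k - b (k+1)) * (γ * Real.sqrt (k+1)) := step
      _ = γ * ∑ k ∈ range N, (b k - b (k+1)) * Real.sqrt (k+1) := by
            rw [Finset.mul_sum]; apply Finset.sum_congr rfl; intros; ring
      _ = γ * ∑ k ∈ range N, b k * (Real.sqrt (k+1) - Real.sqrt k) := by rw [id2]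
      _ ≤ γ * Real.sqrt (∑ k ∈ Finset.range N, (Real.sqrt (k + 1) - Real.sqrt k) ^ 2) :=
            mul_le_mul_of_nonneg_left CS (le_of_lt hγpos)
      _ = 1 := hγQ
  exact absurd final (lt_irrefl 1)

noncomputable def sgn (x : ℝ) : ℝ := if x < 0 then -1 else if 0 < x then 1 else 0

lemma mul_sgn (x : ℝ) : x * sgn x = |x| := by
  unfold sgn
  rcases lt_trichotomy x 0 with h | h | h
  · simp [h, abs_of_neg h, not_lt.2 (le_of_lt h)]
  · simp [h]
  · simp [h, abs_of_pos h, not_lt.2 (le_of_lt h)]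

lemma sgn_ne_zero {x : ℝ} (h : x ≠ 0) : sgn x ≠ 0 := by
  unfold sgn
  rcases lt_trichotomy x 0 with h' | h' | h'
  · simp [h']
  · exact absurd h' h
  · simp [h', not_lt.2 (le_of_lt h')]

lemma sgn_vals (x : ℝ) : sgn x = -1 ∨ sgn x = 0 ∨ sgn x = 1 := by
  unfold sgn
  rcases lt_trichotomy x 0 with h' | h' | h'
  · simp [h']
  · simp [h']
  · simp [h', not_lt.2 (le_of_lt h')]


theorem ternary_exists (N : ℕ) (hN : 1 ≤ N) (a : Fin N → ℝ)
    (ha : ∑ i, a i ^ 2 = 1) :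
    ∃ t : Fin N → ℝ, (∀ i, t i = -1 ∨ t i = 0 ∨ t i = 1) ∧ t ≠ 0 ∧
      gamma N ≤ (∑ i, a i * t i) /
        Real.sqrt ((Finset.univ.filter fun i => t i ≠ 0).card) := by
  set σ : Equiv.Perm (Fin N) := Tuple.sort (fun i => -|a i|) with hσ
  have hmono : Monotone ((fun i => -|a i|) ∘ σ) := Tuple.monotone_sort _
  set b : ℕ → ℝ := fun i => if h : i < N then |a (σ ⟨i, h⟩)| else 0 with hb
  have hbval : ∀ (i : ℕ) (h : i < N), b i = |a (σ ⟨i, h⟩)| := fun i h => dif_pos h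
  have hnn : ∀ i, 0 ≤ b i := by
    intro i; rw [hb]; dsimp only; split
    · exact abs_nonneg _
    · exact le_rfl
  have hzero : ∀ i, N ≤ i → b i = 0 := by
    intro i h; rw [hb]; dsimp only; rw [dif_neg (not_lt.2 h)]
  have hmono' : ∀ i j, i ≤ j → b j ≤ b i := by
    intro i j hij
    by_cases hj : j < N
    · have hi : i < N := lt_of_le_of_lt hij hj
      rw [hbval i hi, hbval j hj]
      have := hmono (show (⟨i, hi⟩ : Fin N) ≤ ⟨j, hj⟩ from hij)
      simpa using this
    · rw [hzero j (not_lt.1 hj)]; exact hnn i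
  have hsum : ∑ i ∈ range N, b i ^ 2 = 1 := by
    rw [← Fin.sum_univ_eq_sum_range (fun i => b i ^ 2) N]
    have : ∀ i : Fin N, b i ^ 2 = (fun j => a j ^ 2) (σ i) := by
      intro i; rw [hbval i i.isLt]; simp [sq_abs]
    rw [Finset.sum_congr rfl (fun i _ => this i), Equiv.sum_comp σ (fun j => a j ^ 2)]
    exact ha
  obtain ⟨k, hk, hkey⟩ := key N hN b hnn hmono' hzero hsum
  set m := k + 1 with hm
  have hmN : m ≤ N := Nat.succ_le_of_lt (Finset.mem_range.1 hk)
  set t : Fin N → ℝ := fun j => if (σ.symm j : ℕ) < m then sgn (a j) else 0 with ht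
  have htval : ∀ j, t j = if (σ.symm j : ℕ) < m then sgn (a j) else 0 := fun j => rfl
  refine ⟨t, ?_, ?_, ?_⟩
  · intro i
    rw [htval]; split
    · exact sgn_vals _
    · right; left; rfl
  · -- t ≠ 0
    have hb0 : 0 < b 0 := by
      rcases lt_or_eq_of_le (hnn 0) with h | h
      · exact h
      · exfalso
        have : ∀ i ∈ range N, b i ^ 2 = 0 := by
          intro i _
          have h1 := hmono' 0 i (Nat.zero_le i)
          have : b i = 0 := le_antisymm (h ▸ h1) (hnn i)
          simp [this]
        rw [Finset.sum_congr rfl this] at hsum; simp at hsum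
    intro h0
    have hi0 : (0:ℕ) < N := hN
    have ha0 : a (σ ⟨0, hi0⟩) ≠ 0 := by
      intro h; rw [hbval 0 hi0, h] at hb0; simp at hb0
    have : t (σ ⟨0, hi0⟩) = 0 := by rw [h0]; rfl
    rw [htval, Equiv.symm_apply_apply] at this
    rw [show ((⟨0, hi0⟩ : Fin N) : ℕ) = 0 from rfl, if_pos (Nat.succ_pos k)] at this
    exact sgn_ne_zero ha0 this
  · -- main inequality
    have hnum : ∑ i, a i * t i = ∑ j ∈ range m, b j := by
      have h1 : ∀ j : Fin N, a j * t j = (fun j => if (σ.symm j : ℕ) < m then |a j| else 0) j := by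
        intro j; rw [htval]; dsimp only; split
        · exact mul_sgn _
        · exact mul_zero _
      rw [Finset.sum_congr rfl (fun j _ => h1 j),
        ← Equiv.sum_comp σ (fun j => if (σ.symm j : ℕ) < m then |a j| else 0)]
      have h2 : ∀ i : Fin N, (if (σ.symm (σ i) : ℕ) < m then |a (σ i)| else 0)
          = (fun n => if n < m then b n else 0) (i : ℕ) := by
        intro i
        rw [Equiv.symm_apply_apply]
        dsimp only
        by_cases h : (i : ℕ) < m
        · rw [if_pos h, if_pos h, hbval _ i.isLt]
        · rw [if_neg h, if_neg h]
      rw [Finset.sum_congr rfl (fun i _ => h2 i),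
        Fin.sum_univ_eq_sum_range (fun n => if n < m then b n else 0) N,
        ← Finset.sum_range_add_sum_Ico _ hmN]
      have h3 : ∑ n ∈ range m, (if n < m then b n else 0) = ∑ n ∈ range m, b n :=
        Finset.sum_congr rfl (fun n hn => if_pos (Finset.mem_range.1 hn))
      have h4 : ∑ n ∈ Ico m N, (if n < m then b n else 0) = 0 :=
        Finset.sum_eq_zero (fun n hn => if_neg (not_lt.2 (Finset.mem_Ico.1 hn).1))
      rw [h3, h4, add_zero]
    set A := Finset.univ.filter (fun i => t i ≠ 0) with hA
    have hcard : A.card ≤ m := by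
      have : A.card ≤ (range m).card := by
        apply Finset.card_le_card_of_injOn (fun j => (σ.symm j : ℕ))
        · intro j hj
          rw [hA, Finset.mem_coe, Finset.mem_filter] at hj
          have := hj.2
          rw [htval] at this
          by_cases h : (σ.symm j : ℕ) < m
          · exact Finset.mem_range.2 h
          · rw [if_neg h] at this; exact absurd rfl this
        · intro x _ y _ hxy
          have : σ.symm x = σ.symm y := Fin.ext hxy
          exact σ.symm.injective this
      simpa using this
    have hApos : 0 < A.card := by
      rcases Nat.eq_zero_or_pos A.card with h | h
      · exfalso
        have hAe : A = ∅ := Finset.card_eq_zero.1 h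
        -- σ ⟨0⟩ should be in A (since numerator positive ⇒ some t nonzero; easier: S m > 0)
        have hb0 : 0 < b 0 := by
          rcases lt_or_eq_of_le (hnn 0) with h' | h'
          · exact h'
          · exfalso
            have : ∀ i ∈ range N, b i ^ 2 = 0 := by
              intro i _
              have h1 := hmono' 0 i (Nat.zero_le i)
              have : b i = 0 := le_antisymm (h' ▸ h1) (hnn i)
              simp [this]
            rw [Finset.sum_congr rfl this] at hsum; simp at hsum
        have hi0 : (0:ℕ) < N := hN
        have ha0 : a (σ ⟨0, hi0⟩) ≠ 0 := by
          intro h'; rw [hbval 0 hi0, h'] at hb0; simp at hb0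
        have : σ ⟨0, hi0⟩ ∈ A := by
          rw [hA, Finset.mem_filter]
          refine ⟨Finset.mem_univ _, ?_⟩
          rw [htval, Equiv.symm_apply_apply]
          rw [if_pos (by simp [hm])]
          exact sgn_ne_zero ha0
        rw [hAe] at this; exact absurd this (Finset.notMem_empty _)
      · exact h
    -- numerator value and positivity
    obtain ⟨hγpos, _⟩ := gamma_pos N hN
    have hmpos : (0:ℝ) < Real.sqrt m := Real.sqrt_pos.2 (by positivity)
    have hnum_pos : 0 ≤ ∑ j ∈ range m, b j := Finset.sum_nonneg (fun j _ => hnn j)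
    have hsm : (Real.sqrt (k+1) : ℝ) = Real.sqrt m := by norm_cast
    have step1 : gamma N ≤ (∑ j ∈ range m, b j) / Real.sqrt m := by
      rw [le_div_iff₀ hmpos]
      calc gamma N * Real.sqrt m = gamma N * Real.sqrt (k+1) := by rw [hsm]
        _ ≤ _ := hkey
    have hcards : Real.sqrt (A.card) ≤ Real.sqrt m := by
      apply Real.sqrt_le_sqrt; exact_mod_cast hcard
    have hcardpos : (0:ℝ) < Real.sqrt (A.card) :=
      Real.sqrt_pos.2 (by exact_mod_cast hApos)
    have step2 : (∑ j ∈ range m, b j) / Real.sqrt m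
        ≤ (∑ j ∈ range m, b j) / Real.sqrt (A.card) :=
      div_le_div_of_nonneg_left hnum_pos hcardpos hcards
    rw [hnum]
    exact le_trans step1 step2
end

section
/- Let $a \in \mathbb{R}_+^N$ with $a[0] \geq a[1] \geq \dots \geq a[N-1] \geq 0$ and $\|a\|_2 = 1$. Then $\max_{1 \leq k \leq N} \frac{\sum_{i=0}^{k-1} a[i]}{\sqrt{k}} \geq \gamma_N$, where $\gamma_N = \left(\sum_{k=1}^{N}(\sqrt{k}-\sqrt{k-1})^2\right)^{-1/2}$. -/
open Finset

theorem sorted_minimax_lower_bound (N : ℕ) (hN : 1 ≤ N) (a : ℕ → ℝ)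
    (hmono : ∀ i j, i ≤ j → j < N → a j ≤ a i)
    (hnonneg : ∀ i, i < N → 0 ≤ a i)
    (hnorm : ∑ i ∈ Finset.range N, a i ^ 2 = 1) :
    ∃ k, 1 ≤ k ∧ k ≤ N ∧
      gamma N ≤ (∑ i ∈ Finset.range k, a i) / Real.sqrt k := by
  set S : ℕ → ℝ := fun k => ∑ i ∈ Finset.range k, a i with hS
  have hne : (Finset.Icc 1 N).Nonempty := ⟨1, by simp [hN]⟩
  set M : ℝ := (Finset.Icc 1 N).sup' hne (fun k => S k / Real.sqrt k) with hM
  obtain ⟨k, hkmem, hMk⟩ := Finset.exists_mem_eq_sup' hne (fun k => S k / Real.sqrt k)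
  obtain ⟨hk1, hkN⟩ := Finset.mem_Icc.mp hkmem
  refine ⟨k, hk1, hkN, ?_⟩
  rw [← hMk]
  -- It suffices to show gamma N ≤ M
  -- basic facts
  have hQ : (0:ℝ) < ∑ k ∈ Finset.range N, (Real.sqrt (k + 1) - Real.sqrt k) ^ 2 := by
    have h0 : (Real.sqrt (0 + 1) - Real.sqrt 0) ^ 2 = 1 := by
      simp [Real.sqrt_one]
    calc (0:ℝ) < 1 := one_pos
      _ = (Real.sqrt ((0:ℕ) + 1) - Real.sqrt (0:ℕ)) ^ 2 := by simp
      _ ≤ ∑ k ∈ Finset.range N, (Real.sqrt (k + 1) - Real.sqrt k) ^ 2 := by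
          apply Finset.single_le_sum (f := fun k : ℕ => (Real.sqrt (k + 1) - Real.sqrt k) ^ 2)
          · intro i _; positivity
          · exact Finset.mem_range.mpr (by omega)
  have hgpos : 0 < gamma N := by
    unfold gamma; positivity
  have hSle : ∀ j, 1 ≤ j → j ≤ N → S j ≤ M * Real.sqrt j := by
    intro j hj1 hjN
    have hmem : j ∈ Finset.Icc 1 N := Finset.mem_Icc.mpr ⟨hj1, hjN⟩
    have hle : S j / Real.sqrt j ≤ M := hM ▸ Finset.le_sup' (fun k : ℕ => S k / Real.sqrt k) hmem
    have hsj : (0:ℝ) < Real.sqrt j := Real.sqrt_pos.mpr (by exact_mod_cast hj1)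
    calc S j = (S j / Real.sqrt j) * Real.sqrt j := by field_simp
      _ ≤ M * Real.sqrt j := by
          apply mul_le_mul_of_nonneg_right hle hsj.le
  have hMnn : 0 ≤ M := by
    have h1 : S 1 / Real.sqrt ((1:ℕ):ℝ) ≤ M :=
      hM ▸ Finset.le_sup' (fun k : ℕ => S k / Real.sqrt k) (Finset.mem_Icc.mpr ⟨le_refl 1, hN⟩)
    have h2 : 0 ≤ S 1 / Real.sqrt ((1:ℕ):ℝ) := by
      have := hnonneg 0 (by omega)
      have hs1 : S 1 = a 0 := by simp [hS]
      rw [hs1]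
      positivity
    linarith
  -- Abel summation
  set g : ℕ → ℝ := fun i => Real.sqrt (i + 1) - Real.sqrt i with hg
  have hG : ∀ n : ℕ, ∑ i ∈ Finset.range n, g i = Real.sqrt n := by
    intro n
    have := Finset.sum_range_sub (fun i : ℕ => Real.sqrt i) n
    simpa [hg] using this
  set T : ℝ := ∑ i ∈ Finset.range N, a i * g i with hT
  have habel1 : T = a (N - 1) * Real.sqrt N
      - ∑ i ∈ Finset.range (N - 1), (a (i + 1) - a i) * Real.sqrt (i + 1) := by
    have := Finset.sum_range_by_parts a g N
    simp only [smul_eq_mul] at this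
    rw [hT, this, hG]
    congr 1
    apply Finset.sum_congr rfl
    intro i _
    rw [hG]
    push_cast
    try ring_nf
  have habel2 : (1:ℝ) = a (N - 1) * S N
      - ∑ i ∈ Finset.range (N - 1), (a (i + 1) - a i) * S (i + 1) := by
    have := Finset.sum_range_by_parts a a N
    simp only [smul_eq_mul] at this
    rw [← hnorm]
    simp_rw [sq]
    rw [this]
  have hkey : (1:ℝ) ≤ M * T := by
    have hterm : ∀ i ∈ Finset.range (N - 1),
        (a i - a (i + 1)) * S (i + 1) ≤ (a i - a (i + 1)) * (M * Real.sqrt (i + 1)) := by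
      intro i hi
      rw [Finset.mem_range] at hi
      apply mul_le_mul_of_nonneg_left
      · exact hSle (i + 1) (by omega) (by omega) |>.trans_eq (by push_cast; try ring_nf)
      · have := hmono i (i + 1) (by omega) (by omega)
        linarith
    have hlast : a (N - 1) * S N ≤ a (N - 1) * (M * Real.sqrt N) :=
      mul_le_mul_of_nonneg_left (hSle N hN le_rfl) (hnonneg (N - 1) (by omega))
    have hsum := Finset.sum_le_sum hterm
    have e1 : (1:ℝ) = a (N - 1) * S N
        + ∑ i ∈ Finset.range (N - 1), (a i - a (i + 1)) * S (i + 1) := by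
      rw [habel2]
      rw [sub_eq_add_neg, ← Finset.sum_neg_distrib]
      congr 1
      apply Finset.sum_congr rfl
      intro i _; ring
    have e2 : M * T = a (N - 1) * (M * Real.sqrt N)
        + ∑ i ∈ Finset.range (N - 1), (a i - a (i + 1)) * (M * Real.sqrt (i + 1)) := by
      rw [habel1, mul_sub, Finset.mul_sum]
      rw [sub_eq_add_neg, ← Finset.sum_neg_distrib]
      congr 1
      · ring
      · apply Finset.sum_congr rfl
        intro i _; ring
    rw [e1, e2]
    exact add_le_add hlast hsum
  -- Cauchy-Schwarz : T ≤ 1 / gamma N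
  have hCS : T ≤ 1 / gamma N := by
    have hcs := Finset.sum_mul_sq_le_sq_mul_sq (Finset.range N) a g
    rw [hnorm, one_mul] at hcs
    have hginv : 1 / gamma N = Real.sqrt (∑ k ∈ Finset.range N, g k ^ 2) := by
      rw [gamma, one_div_one_div]
    rw [hginv]
    have hT2 : T ^ 2 ≤ ∑ i ∈ Finset.range N, g i ^ 2 := hcs
    calc T ≤ |T| := le_abs_self T
      _ = Real.sqrt (T ^ 2) := (Real.sqrt_sq_eq_abs T).symm
      _ ≤ Real.sqrt (∑ i ∈ Finset.range N, g i ^ 2) := Real.sqrt_le_sqrt hT2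
  -- conclude
  have hTpos : 0 < T := by
    by_contra h
    push_neg at h
    have : M * T ≤ 0 := mul_nonpos_of_nonneg_of_nonpos hMnn h
    linarith
  have : 1 ≤ M * (1 / gamma N) := le_trans hkey (mul_le_mul_of_nonneg_left hCS hMnn)
  have : gamma N ≤ M := by
    rw [mul_one_div, le_div_iff₀ hgpos] at this
    linarith
  exact this
end

section
/- The lower bound $\min_a \max_{1\leq k \leq N} \frac{\sum_{i=0}^{k-1} a[i]}{\sqrt{k}} = \gamma_N$ is attained: the minimum over all nonnegative non-increasing unit vectors $a \in \mathbb{R}^N$ equals exactly $\gamma_N = \left(\sum_{k=1}^{N}(\sqrt{k}-\sqrt{k-1})^2\right)^{-1/2}$, with equality achieved by the vector $a^*[i] = \gamma_N(\sqrt{i+1}-\sqrt{i})$ for $0 \leq i \leq N-1$. -/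
open Finset

lemma sqrt_tele (n : ℕ) :
    ∑ i ∈ Finset.range n, (Real.sqrt (i + 1) - Real.sqrt i) = Real.sqrt n := by
  have h := Finset.sum_range_sub (fun i : ℕ => Real.sqrt i) n
  simp only [Nat.cast_zero, Real.sqrt_zero, sub_zero] at h
  push_cast at h
  exact h

lemma b_nonneg (i : ℕ) : 0 ≤ Real.sqrt (i + 1) - Real.sqrt i := by
  have : Real.sqrt i ≤ Real.sqrt (i + 1) := Real.sqrt_le_sqrt (by linarith)
  linarith

lemma b_pos (i : ℕ) : 0 < Real.sqrt (i + 1) - Real.sqrt i := by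
  have : Real.sqrt i < Real.sqrt (i + 1) :=
    Real.sqrt_lt_sqrt (by positivity) (by linarith)
  linarith

lemma b_anti : Antitone (fun k : ℕ => Real.sqrt (k + 1) - Real.sqrt k) := by
  apply antitone_nat_of_succ_le
  intro k
  have hx : (0:ℝ) ≤ Real.sqrt k := Real.sqrt_nonneg _
  have hy : (0:ℝ) ≤ Real.sqrt (k + 1) := Real.sqrt_nonneg _
  have hz : (0:ℝ) ≤ Real.sqrt ((k:ℝ) + 1 + 1) := Real.sqrt_nonneg _
  have hx2 : Real.sqrt k ^ 2 = (k:ℝ) := Real.sq_sqrt (by positivity)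
  have hy2 : Real.sqrt ((k:ℝ) + 1) ^ 2 = (k:ℝ) + 1 := Real.sq_sqrt (by positivity)
  have hz2 : Real.sqrt ((k:ℝ) + 1 + 1) ^ 2 = (k:ℝ) + 2 := by
    rw [show ((k:ℝ) + 1 + 1) = ((k:ℝ) + 2) by ring]
    exact Real.sq_sqrt (by positivity)
  have key : Real.sqrt k * Real.sqrt ((k:ℝ) + 1 + 1) ≤ Real.sqrt ((k:ℝ) + 1) ^ 2 := by
    nlinarith [sq_nonneg (Real.sqrt k * Real.sqrt ((k:ℝ) + 1 + 1) - Real.sqrt ((k:ℝ) + 1) ^ 2),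
      mul_nonneg hx hz]
  have goal2 : (Real.sqrt k + Real.sqrt ((k:ℝ) + 1 + 1)) ^ 2 ≤
      (2 * Real.sqrt ((k:ℝ) + 1)) ^ 2 := by nlinarith
  push_cast
  nlinarith [goal2, hx, hy, hz, hy2]

lemma S_pos (N : ℕ) (hN : 1 ≤ N) :
    0 < ∑ k ∈ Finset.range N, (Real.sqrt (k + 1) - Real.sqrt k) ^ 2 := by
  apply Finset.sum_pos
  · intro k _; exact pow_pos (b_pos k) 2
  · exact ⟨0, Finset.mem_range.mpr hN⟩

theorem minimax_attained (N : ℕ) (hN : 1 ≤ N) :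
    (∀ a : ℕ → ℝ, (∀ i j, i ≤ j → j < N → a j ≤ a i) →
      (∀ i, i < N → 0 ≤ a i) → (∑ i ∈ Finset.range N, a i ^ 2 = 1) →
      ∃ k, 1 ≤ k ∧ k ≤ N ∧
        gamma N ≤ (∑ i ∈ Finset.range k, a i) / Real.sqrt k) ∧
    ((∀ i j, i ≤ j → j < N →
        gamma N * (Real.sqrt (j + 1) - Real.sqrt j) ≤
          gamma N * (Real.sqrt (i + 1) - Real.sqrt i)) ∧
      (∀ i, i < N → 0 ≤ gamma N * (Real.sqrt (i + 1) - Real.sqrt i)) ∧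
      (∑ i ∈ Finset.range N, (gamma N * (Real.sqrt (i + 1) - Real.sqrt i)) ^ 2 = 1) ∧
      ∀ k, 1 ≤ k → k ≤ N →
        (∑ i ∈ Finset.range k, gamma N * (Real.sqrt (i + 1) - Real.sqrt i)) /
          Real.sqrt k = gamma N) := by
  have hS : 0 < ∑ k ∈ Finset.range N, (Real.sqrt (k + 1) - Real.sqrt k) ^ 2 := S_pos N hN
  set Ssum := ∑ k ∈ Finset.range N, (Real.sqrt (k + 1) - Real.sqrt k) ^ 2 with hSsum
  have hsqS : 0 < Real.sqrt Ssum := Real.sqrt_pos.mpr hS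
  have hgamma : gamma N = 1 / Real.sqrt Ssum := rfl
  have hg0 : 0 < gamma N := by rw [hgamma]; positivity
  constructor
  · intro a hmono hpos hsum
    set Sa : ℕ → ℝ := fun m => ∑ i ∈ Finset.range m, a i with hSa
    obtain ⟨k, hkmem, hmax⟩ := Finset.exists_max_image (Finset.Icc 1 N)
      (fun m => Sa m / Real.sqrt m) ⟨1, Finset.mem_Icc.mpr ⟨le_refl 1, hN⟩⟩
    rw [Finset.mem_Icc] at hkmem
    set M := Sa k / Real.sqrt k with hM
    refine ⟨k, hkmem.1, hkmem.2, ?_⟩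
    have hM0 : 0 ≤ M := by
      have h1 := hmax 1 (Finset.mem_Icc.mpr ⟨le_refl 1, hN⟩)
      simp only [Nat.cast_one, Real.sqrt_one, div_one] at h1
      have hSa1 : Sa 1 = a 0 := by simp [hSa]
      rw [hSa1] at h1
      exact le_trans (hpos 0 hN) h1
    have hSj : ∀ j, 1 ≤ j → j ≤ N → Sa j ≤ M * Real.sqrt j := by
      intro j hj1 hjN
      have hsj : 0 < Real.sqrt (j:ℝ) := Real.sqrt_pos.mpr (by exact_mod_cast hj1)
      have hle := hmax j (Finset.mem_Icc.mpr ⟨hj1, hjN⟩)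
      calc Sa j = (Sa j / Real.sqrt j) * Real.sqrt j := by field_simp
        _ ≤ M * Real.sqrt j := mul_le_mul_of_nonneg_right hle hsj.le
    have parts1 : ∑ i ∈ Finset.range N, a i * a i =
        a (N - 1) * Sa N - ∑ i ∈ Finset.range (N - 1), (a (i + 1) - a i) * Sa (i + 1) := by
      simpa [smul_eq_mul, hSa] using Finset.sum_range_by_parts a a N
    have parts2 : ∑ i ∈ Finset.range N, a i * (Real.sqrt (i + 1) - Real.sqrt i) =
        a (N - 1) * Real.sqrt N -
          ∑ i ∈ Finset.range (N - 1), (a (i + 1) - a i) * Real.sqrt (i + 1) := by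
      have h := Finset.sum_range_by_parts a
        (fun i : ℕ => Real.sqrt (i + 1) - Real.sqrt i) N
      simp only [smul_eq_mul, sqrt_tele] at h
      push_cast at h
      exact h
    have hsum' : ∑ i ∈ Finset.range N, a i * a i = 1 := by
      rw [← hsum]; exact Finset.sum_congr rfl fun i _ => by ring
    have hNm1 : N - 1 < N := Nat.sub_lt hN one_pos
    have hb1 : a (N - 1) * Sa N ≤ a (N - 1) * (M * Real.sqrt N) :=
      mul_le_mul_of_nonneg_left (hSj N hN (le_refl N)) (hpos _ hNm1)
    have hb2 : ∑ i ∈ Finset.range (N - 1), (a (i + 1) - a i) * (M * Real.sqrt (i + 1)) ≤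
        ∑ i ∈ Finset.range (N - 1), (a (i + 1) - a i) * Sa (i + 1) := by
      apply Finset.sum_le_sum
      intro i hi
      rw [Finset.mem_range] at hi
      have hiN : i + 1 < N := by omega
      have hw : 0 ≤ a i - a (i + 1) := by
        have := hmono i (i + 1) (by omega) hiN
        linarith
      have hs := hSj (i + 1) (by omega) (by omega)
      push_cast at hs ⊢
      nlinarith
    have hone : (1:ℝ) ≤ M * ∑ i ∈ Finset.range N, a i * (Real.sqrt (i + 1) - Real.sqrt i) := by
      have key : (1:ℝ) ≤ a (N - 1) * (M * Real.sqrt N) -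
          ∑ i ∈ Finset.range (N - 1), (a (i + 1) - a i) * (M * Real.sqrt (i + 1)) := by
        have h0 : (1:ℝ) = a (N - 1) * Sa N -
            ∑ i ∈ Finset.range (N - 1), (a (i + 1) - a i) * Sa (i + 1) := by
          rw [← parts1]; exact hsum'.symm
        linarith [h0, hb1, hb2]
      calc (1:ℝ) ≤ a (N - 1) * (M * Real.sqrt N) -
          ∑ i ∈ Finset.range (N - 1), (a (i + 1) - a i) * (M * Real.sqrt (i + 1)) := key
        _ = M * (a (N - 1) * Real.sqrt N -
            ∑ i ∈ Finset.range (N - 1), (a (i + 1) - a i) * Real.sqrt (i + 1)) := by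
            rw [mul_sub, Finset.mul_sum]
            congr 1
            · ring
            · exact Finset.sum_congr rfl fun i _ => by ring
        _ = M * ∑ i ∈ Finset.range N, a i * (Real.sqrt (i + 1) - Real.sqrt i) := by
            rw [parts2]
    have hcs : ∑ i ∈ Finset.range N, a i * (Real.sqrt (i + 1) - Real.sqrt i) ≤
        Real.sqrt Ssum := by
      have h2 := Finset.sum_mul_sq_le_sq_mul_sq (Finset.range N) a
        (fun i : ℕ => Real.sqrt (i + 1) - Real.sqrt i)
      simp only [hsum, one_mul] at h2
      have hnn : 0 ≤ ∑ i ∈ Finset.range N, a i * (Real.sqrt (i + 1) - Real.sqrt i) :=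
        Finset.sum_nonneg fun i hi =>
          mul_nonneg (hpos i (Finset.mem_range.mp hi)) (b_nonneg i)
      exact (Real.le_sqrt hnn hS.le).mpr h2
    have h1MS : (1:ℝ) ≤ M * Real.sqrt Ssum :=
      le_trans hone (mul_le_mul_of_nonneg_left hcs hM0)
    have hfin : gamma N ≤ M := by
      rw [hgamma, div_le_iff₀ hsqS]
      linarith
    exact hfin
  · refine ⟨?_, ?_, ?_, ?_⟩
    · intro i j hij _
      exact mul_le_mul_of_nonneg_left (b_anti hij) hg0.le
    · intro i _
      exact mul_nonneg hg0.le (b_nonneg i)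
    · have heq : ∑ i ∈ Finset.range N, (gamma N * (Real.sqrt (i + 1) - Real.sqrt i)) ^ 2 =
          gamma N ^ 2 * Ssum := by
        rw [hSsum, Finset.mul_sum]
        exact Finset.sum_congr rfl fun i _ => by ring
      rw [heq, hgamma, div_pow, one_pow, Real.sq_sqrt hS.le]
      field_simp
    · intro k hk1 hkN
      have hsk : 0 < Real.sqrt (k:ℝ) := Real.sqrt_pos.mpr (by exact_mod_cast hk1)
      rw [← Finset.mul_sum, sqrt_tele]
      field_simp
end

section
/- Among all ternary vectors $t \in \{-1,0,1\}^N$ whose angle with a given $x \in \mathbb{R}^N \setminus \{0\}$ has cosine at least $\cos\theta$ (i.e., $\langle x,t\rangle / (\|x\|\sqrt{\|t\|_0}) \geq \cos\theta$), if this set is nonempty then it contains a vector of minimal $\|t\|_0$ of the form: $t[i] \in \{0, \mathrm{sign}(x[i])\}$ for all $i$, and the set of nonzero indices of $t$ equals the indices of the top-$q$ absolute values of $x$ for some $q$. -/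
open Finset
open scoped Classical

/-- The support of a vector as a finite set. -/
noncomputable def supp {N : ℕ} (t : Fin N → ℝ) : Finset (Fin N) :=
  Finset.univ.filter fun i => t i ≠ 0

lemma exists_top_set {N : ℕ} (f : Fin N → ℝ) :
    ∀ q : ℕ, q ≤ N → ∃ S : Finset (Fin N), S.card = q ∧
      ∀ i ∈ S, ∀ j ∉ S, f j ≤ f i := by
  intro q
  induction q with
  | zero => exact fun _ => ⟨∅, rfl, by simp⟩
  | succ q ih =>
    intro hq
    obtain ⟨S, hcard, htop⟩ := ih (Nat.le_of_succ_le hq)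
    have hne : Sᶜ.Nonempty := by
      rw [← Finset.card_pos, Finset.card_compl, Fintype.card_fin, hcard]
      omega
    obtain ⟨b, hb, hbmax⟩ := Finset.exists_max_image Sᶜ f hne
    have hbS : b ∉ S := Finset.mem_compl.mp hb
    refine ⟨insert b S, by rw [Finset.card_insert_of_notMem hbS, hcard], ?_⟩
    intro i hi j hj
    rcases Finset.mem_insert.mp hi with rfl | hiS
    · exact hbmax j (Finset.mem_compl.mpr fun h => hj (Finset.mem_insert_of_mem h))
    · exact htop i hiS j fun h => hj (Finset.mem_insert_of_mem h)

lemma sum_le_sum_top {N : ℕ} (f : Fin N → ℝ) (hf : ∀ i, 0 ≤ f i)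
    (A S : Finset (Fin N)) (hcard : A.card ≤ S.card)
    (htop : ∀ i ∈ S, ∀ j ∉ S, f j ≤ f i) :
    ∑ i ∈ A, f i ≤ ∑ i ∈ S, f i := by
  have h1 : ∑ i ∈ A ∩ S, f i + ∑ i ∈ A \ S, f i = ∑ i ∈ A, f i :=
    Finset.sum_inter_add_sum_sdiff A S f
  have h2 : ∑ i ∈ S ∩ A, f i + ∑ i ∈ S \ A, f i = ∑ i ∈ S, f i :=
    Finset.sum_inter_add_sum_sdiff S A f
  have hIC : A ∩ S = S ∩ A := Finset.inter_comm A S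
  have hc1 : (A \ S).card + (A ∩ S).card = A.card := Finset.card_sdiff_add_card_inter A S
  have hc2 : (S \ A).card + (S ∩ A).card = S.card := Finset.card_sdiff_add_card_inter S A
  have hcd : (A \ S).card ≤ (S \ A).card := by rw [hIC] at hc1; omega
  have key : ∑ i ∈ A \ S, f i ≤ ∑ i ∈ S \ A, f i := by
    rcases Finset.eq_empty_or_nonempty (S \ A) with he | hne
    · have h0 : (S \ A).card = 0 := by rw [he]; rfl
      have : (A \ S).card = 0 := by omega
      rw [Finset.card_eq_zero.mp this, he]
    · obtain ⟨i₀, hi₀, hmin⟩ := Finset.exists_min_image (S \ A) f hne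
      have hstep1 : ∑ i ∈ A \ S, f i ≤ (A \ S).card • f i₀ := by
        apply Finset.sum_le_card_nsmul
        intro j hj
        exact htop i₀ (Finset.mem_sdiff.mp hi₀).1 j (Finset.mem_sdiff.mp hj).2
      have hstep2 : (A \ S).card • f i₀ ≤ (S \ A).card • f i₀ :=
        nsmul_le_nsmul_left (hf i₀) hcd
      have hstep3 : (S \ A).card • f i₀ ≤ ∑ i ∈ S \ A, f i :=
        Finset.card_nsmul_le_sum _ _ _ fun i hi => hmin i hi
      linarith
  rw [← h1, ← h2, hIC]
  linarith

lemma self_mul_sign' (x : ℝ) : x * Real.sign x = |x| := by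
  rcases lt_trichotomy x 0 with h | h | h
  · rw [Real.sign_of_neg h, abs_of_neg h]; ring
  · simp [h]
  · rw [Real.sign_of_pos h, abs_of_pos h]; ring

/-- Among ternary vectors within angle `θ` of `x`, there is one of minimal
`ℓ₀` norm with the sign/top-`q` structure. -/
theorem minimal_sparse_ternarization_structure (N : ℕ) (x : Fin N → ℝ)
    (hx : x ≠ 0) (θ : ℝ) (hθ₁ : 0 < θ) (hθ₂ : θ < Real.pi / 2)
    (hne : ∃ t : Fin N → ℝ, (∀ i, t i = -1 ∨ t i = 0 ∨ t i = 1) ∧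
      Real.cos θ ≤ (∑ i, x i * t i) /
        (Real.sqrt (∑ i, x i ^ 2) * Real.sqrt (supp t).card)) :
    ∃ t : Fin N → ℝ, (∀ i, t i = -1 ∨ t i = 0 ∨ t i = 1) ∧
      Real.cos θ ≤ (∑ i, x i * t i) /
        (Real.sqrt (∑ i, x i ^ 2) * Real.sqrt (supp t).card) ∧
      (∀ t' : Fin N → ℝ, (∀ i, t' i = -1 ∨ t' i = 0 ∨ t' i = 1) →
        Real.cos θ ≤ (∑ i, x i * t' i) /
          (Real.sqrt (∑ i, x i ^ 2) * Real.sqrt (supp t').card) →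
        (supp t).card ≤ (supp t').card) ∧
      (∀ i, t i = 0 ∨ t i = Real.sign (x i)) ∧
      (∃ q, (supp t).card = q ∧
        ∀ i ∈ supp t, ∀ j ∉ supp t, |x j| ≤ |x i|) := by
  set nx := Real.sqrt (∑ i, x i ^ 2) with hnx
  have hcosθ : 0 < Real.cos θ := by
    apply Real.cos_pos_of_mem_Ioo
    constructor
    · have := Real.pi_pos; linarith
    · exact hθ₂
  have hnxpos : 0 < nx := by
    obtain ⟨i₀, hi₀⟩ := Function.ne_iff.mp hx
    apply Real.sqrt_pos.mpr
    apply Finset.sum_pos' (fun i _ => sq_nonneg _)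
    exact ⟨i₀, Finset.mem_univ _, pow_two_pos_of_ne_zero hi₀⟩
  -- minimal cardinality via Nat.find
  have hP : ∃ n : ℕ, ∃ t : Fin N → ℝ, (∀ i, t i = -1 ∨ t i = 0 ∨ t i = 1) ∧
      Real.cos θ ≤ (∑ i, x i * t i) / (nx * Real.sqrt (supp t).card) ∧
      (supp t).card = n := by
    obtain ⟨t, h1, h2⟩ := hne
    exact ⟨(supp t).card, t, h1, h2, rfl⟩
  obtain ⟨t₀, ht₀tern, ht₀cos, ht₀card⟩ := Nat.find_spec hP
  have hmin : ∀ t' : Fin N → ℝ, (∀ i, t' i = -1 ∨ t' i = 0 ∨ t' i = 1) →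
      Real.cos θ ≤ (∑ i, x i * t' i) / (nx * Real.sqrt (supp t').card) →
      (supp t₀).card ≤ (supp t').card := fun t' a b =>
    le_trans (le_of_eq ht₀card) (Nat.find_min' hP ⟨t', a, b, rfl⟩)
  set q := (supp t₀).card with hqdef
  -- q ≥ 1
  have hq1 : 1 ≤ q := by
    by_contra h
    have hq0 : q = 0 := by omega
    rw [hq0] at ht₀cos
    simp at ht₀cos
    linarith
  have hqN : q ≤ N :=
    le_trans (Finset.card_le_univ _) (le_of_eq (Finset.card_fin N))
  -- the top-q set
  obtain ⟨S, hScard, hStop⟩ := exists_top_set (fun i => |x i|) q hqN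
  -- construct t
  set t : Fin N → ℝ := fun i => if i ∈ S then Real.sign (x i) else 0 with htdef
  have htern : ∀ i, t i = -1 ∨ t i = 0 ∨ t i = 1 := by
    intro i
    simp only [htdef]
    split
    · rcases lt_trichotomy (x i) 0 with h | h | h
      · left; exact Real.sign_of_neg h
      · right; left; simp [h]
      · right; right; exact Real.sign_of_pos h
    · right; left; rfl
  have hsupp : supp t = S.filter fun i => x i ≠ 0 := by
    ext i
    simp only [supp, Finset.mem_filter, Finset.mem_univ, true_and, htdef]
    constructor
    · intro h
      by_cases hiS : i ∈ S
      · exact ⟨hiS, fun h0 => h (by simp [hiS, h0])⟩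
      · exact absurd (by simp [hiS]) h
    · rintro ⟨hiS, hx0⟩
      simp only [if_pos hiS]
      exact fun h0 => hx0 (Real.sign_eq_zero_iff.mp h0)
  -- numerator for t
  have hnum : ∑ i, x i * t i = ∑ i ∈ S, |x i| := by
    rw [show (∑ i, x i * t i) = ∑ i ∈ S, x i * t i from
      (Finset.sum_subset (Finset.subset_univ S) (by
        intro i _ hiS
        simp [htdef, hiS])).symm]
    apply Finset.sum_congr rfl
    intro i hiS
    simp only [htdef, if_pos hiS]
    exact self_mul_sign' (x i)
  -- numerator equals sum over supp t
  have hnum2 : ∑ i ∈ S, |x i| = ∑ i ∈ supp t, |x i| := by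
    rw [hsupp]
    refine (Finset.sum_filter_of_ne ?_).symm
    intro i _ h
    exact fun h0 => h (by rw [h0]; simp)
  -- the key bound on t₀'s numerator
  have hbound : ∑ i, x i * t₀ i ≤ ∑ i ∈ S, |x i| := by
    have step1 : ∑ i, x i * t₀ i ≤ ∑ i ∈ supp t₀, |x i| := by
      rw [show (∑ i, x i * t₀ i) = ∑ i ∈ supp t₀, x i * t₀ i from
        (Finset.sum_subset (Finset.subset_univ _) (by
          intro i _ hi
          simp only [supp, Finset.mem_filter, Finset.mem_univ, true_and, not_not] at hi
          simp [hi])).symm]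
      apply Finset.sum_le_sum
      intro i _
      calc x i * t₀ i ≤ |x i * t₀ i| := le_abs_self _
        _ = |x i| * |t₀ i| := abs_mul _ _
        _ ≤ |x i| * 1 := by
            apply mul_le_mul_of_nonneg_left _ (abs_nonneg _)
            rcases ht₀tern i with h | h | h <;> rw [h] <;> norm_num
        _ = |x i| := mul_one _
    have step2 : ∑ i ∈ supp t₀, |x i| ≤ ∑ i ∈ S, |x i| :=
      sum_le_sum_top _ (fun i => abs_nonneg _) _ _ hScard.ge hStop
    linarith
  -- denominator facts
  have hDpos : 0 < nx * Real.sqrt q := by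
    apply mul_pos hnxpos
    apply Real.sqrt_pos.mpr
    exact_mod_cast hq1
  have hkey : Real.cos θ * (nx * Real.sqrt q) ≤ ∑ i ∈ S, |x i| :=
    le_trans ((le_div_iff₀ hDpos).mp ht₀cos) hbound
  have hsumpos : 0 < ∑ i ∈ S, |x i| := lt_of_lt_of_le (mul_pos hcosθ hDpos) hkey
  have hcardle : (supp t).card ≤ q := by
    rw [hsupp, ← hScard]
    exact Finset.card_le_card (Finset.filter_subset _ _)
  have hcard1 : 1 ≤ (supp t).card := by
    by_contra h
    have h0 : supp t = ∅ := Finset.card_eq_zero.mp (by omega)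
    rw [hnum2, h0, Finset.sum_empty] at hsumpos
    exact lt_irrefl _ hsumpos
  have hD'pos : 0 < nx * Real.sqrt (supp t).card := by
    apply mul_pos hnxpos
    apply Real.sqrt_pos.mpr
    exact_mod_cast hcard1
  have hcos_t : Real.cos θ ≤ (∑ i, x i * t i) / (nx * Real.sqrt (supp t).card) := by
    rw [le_div_iff₀ hD'pos, hnum]
    calc Real.cos θ * (nx * Real.sqrt (supp t).card)
        ≤ Real.cos θ * (nx * Real.sqrt q) := by
          apply mul_le_mul_of_nonneg_left _ (le_of_lt hcosθ)
          apply mul_le_mul_of_nonneg_left _ (le_of_lt hnxpos)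
          apply Real.sqrt_le_sqrt
          exact_mod_cast hcardle
      _ ≤ ∑ i ∈ S, |x i| := hkey
  have hcardq : (supp t).card = q := le_antisymm hcardle (hmin t htern hcos_t)
  have hsuppS : supp t = S := by
    apply Finset.eq_of_subset_of_card_le
    · rw [hsupp]; exact Finset.filter_subset _ _
    · rw [hScard, hcardq]
  refine ⟨t, htern, hcos_t, ?_, ?_, q, hcardq, ?_⟩
  · intro t' a b
    rw [hcardq]
    exact hmin t' a b
  · intro i
    by_cases hiS : i ∈ S
    · right; simp [htdef, hiS]
    · left; simp [htdef, hiS]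
  · intro i hi j hj
    rw [hsuppS] at hi hj
    exact hStop i hi j hj
end

section
/- Let $U \in \mathbb{R}^{M \times K}$, $V \in \mathbb{R}^{K \times N}$, $W \in \mathbb{R}^{M\times N}$. Then $S^* = [(U^\top U) \odot (VV^\top)]^{\dagger} \operatorname{diag}(U^\top W V^\top)$ minimizes $\|W - U\operatorname{diag}(S)V\|_F$ over $S \in \mathbb{R}^K$, where $(\cdot)^\dagger$ denotes the Moore–Penrose pseudo-inverse. -/
open Matrix Finset

/-- If `XᵀX = 0` over `ℝ` then `X = 0`. -/
lemma tsvd_tX_mul_self_eq_zero {m k : Type*} [Fintype m] [Fintype k]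
    (X : Matrix m k ℝ) (h : Xᵀ * X = 0) : X = 0 :=
  Matrix.conjTranspose_mul_self_eq_zero.mp (by simpa using h)

/-- Key normal-equation identity: if `G = AᵀA` and `G P G = G` then `G P Aᵀ = Aᵀ`. -/
lemma tsvd_aux_key {m k : Type*} [Fintype m] [Fintype k]
    (A : Matrix m k ℝ) (G P : Matrix k k ℝ)
    (hG : Aᵀ * A = G) (hP1 : G * P * G = G) :
    G * P * Aᵀ = Aᵀ := by
  have hGT : Gᵀ = G := by
    rw [← hG, Matrix.transpose_mul, Matrix.transpose_transpose]
  have hXz : (A * Pᵀ * G - A)ᵀ * (A * Pᵀ * G - A) = 0 := by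
    have hXT : (A * Pᵀ * G - A)ᵀ = G * P * Aᵀ - Aᵀ := by
      simp only [Matrix.transpose_sub, Matrix.transpose_mul, Matrix.transpose_transpose,
        hGT, Matrix.mul_assoc]
    rw [hXT]
    simp only [Matrix.sub_mul, Matrix.mul_sub, Matrix.mul_assoc]
    rw [show Aᵀ * (A * (Pᵀ * G)) = G * (Pᵀ * G) by rw [← Matrix.mul_assoc, hG]]
    rw [show G * (P * (G * (Pᵀ * G))) = G * (Pᵀ * G) by
      rw [← Matrix.mul_assoc, ← Matrix.mul_assoc, hP1]]
    rw [show G * (P * (Aᵀ * A)) = G by rw [hG, ← Matrix.mul_assoc, hP1], hG]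
    abel
  have hAPG : A * Pᵀ * G = A := sub_eq_zero.mp (tsvd_tX_mul_self_eq_zero _ hXz)
  have h := congrArg Matrix.transpose hAPG
  simp only [Matrix.transpose_mul, Matrix.transpose_transpose, hGT] at h
  rw [Matrix.mul_assoc]
  exact h

/-- Least-squares optimality given the normal-equation identity. -/
lemma tsvd_aux_ls {m k : Type*} [Fintype m] [Fintype k]
    (A : Matrix m k ℝ) (P : Matrix k k ℝ) (w : m → ℝ)
    (hkey : Aᵀ * A * P * Aᵀ = Aᵀ) (S : k → ℝ) :
    ∑ p, (w p - A.mulVec (P.mulVec (Aᵀ.mulVec w)) p) ^ 2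
      ≤ ∑ p, (w p - A.mulVec S p) ^ 2 := by
  set Sstar : k → ℝ := P.mulVec (Aᵀ.mulVec w) with hSstar
  set u : m → ℝ := fun p => w p - A.mulVec Sstar p with hu
  set d : k → ℝ := fun i => S i - Sstar i with hd
  have hmv : ∀ p, A.mulVec S p = A.mulVec Sstar p + A.mulVec d p := by
    intro p
    have : S = Sstar + d := by funext i; simp [hd]
    rw [this, Matrix.mulVec_add]; rfl
  -- the residual is orthogonal to the range of A
  have hAtu : Aᵀ.mulVec u = 0 := by
    have h1 : Aᵀ.mulVec u = Aᵀ.mulVec w - Aᵀ.mulVec (A.mulVec Sstar) := by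
      have : u = w - A.mulVec Sstar := rfl
      rw [this, Matrix.mulVec_sub]
    have h2 : Aᵀ.mulVec (A.mulVec Sstar) = Aᵀ.mulVec w := by
      rw [hSstar, Matrix.mulVec_mulVec, Matrix.mulVec_mulVec, Matrix.mulVec_mulVec, hkey]
    rw [h1, h2, sub_self]
  have hcross : ∑ p, u p * A.mulVec d p = 0 := by
    have h3 : ∑ p, u p * A.mulVec d p = u ⬝ᵥ A.mulVec d := rfl
    rw [h3, Matrix.dotProduct_mulVec,
      show u ᵥ* A = Aᵀ.mulVec u from (Matrix.mulVec_transpose A u).symm, hAtu,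
      zero_dotProduct]
  have hrhs : ∑ p, (w p - A.mulVec S p) ^ 2
      = ∑ p, (u p) ^ 2 - 2 * ∑ p, u p * A.mulVec d p + ∑ p, (A.mulVec d p) ^ 2 := by
    rw [Finset.mul_sum, ← Finset.sum_sub_distrib, ← Finset.sum_add_distrib]
    refine Finset.sum_congr rfl fun p _ => ?_
    rw [hmv p]
    have h4 : A.mulVec Sstar p = w p - u p := by
      have : u p = w p - A.mulVec Sstar p := rfl
      rw [this]; ring
    rw [h4]
    ring
  rw [hrhs, hcross]
  have h1 : (0:ℝ) ≤ ∑ p, (A.mulVec d p) ^ 2 :=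
    Finset.sum_nonneg fun p _ => sq_nonneg _
  have h2 : ∑ p, (w p - A.mulVec Sstar p) ^ 2 = ∑ p, (u p) ^ 2 := rfl
  rw [h2]; linarith

/-- `S* = [(UᵀU) ⊙ (VVᵀ)]⁺ diag(Uᵀ W Vᵀ)` minimizes `‖W - U diag(S) V‖_F`,
where the Moore–Penrose pseudo-inverse `P` of the Gram matrix is characterized
by the four Penrose conditions. -/
theorem tsvd_least_squares_solution (M N K : ℕ)
    (U : Matrix (Fin M) (Fin K) ℝ) (V : Matrix (Fin K) (Fin N) ℝ)
    (W : Matrix (Fin M) (Fin N) ℝ)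
    (P : Matrix (Fin K) (Fin K) ℝ)
    (hP1 : Matrix.hadamard (Uᵀ * U) (V * Vᵀ) * P * Matrix.hadamard (Uᵀ * U) (V * Vᵀ) =
      Matrix.hadamard (Uᵀ * U) (V * Vᵀ))
    (hP2 : P * Matrix.hadamard (Uᵀ * U) (V * Vᵀ) * P = P)
    (hP3 : (Matrix.hadamard (Uᵀ * U) (V * Vᵀ) * P)ᵀ =
      Matrix.hadamard (Uᵀ * U) (V * Vᵀ) * P)
    (hP4 : (P * Matrix.hadamard (Uᵀ * U) (V * Vᵀ))ᵀ =
      P * Matrix.hadamard (Uᵀ * U) (V * Vᵀ)) :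
    ∀ S : Fin K → ℝ,
      (∑ i, ∑ j,
        (W - U * Matrix.diagonal (P.mulVec fun k => (Uᵀ * W * Vᵀ) k k) * V) i j ^ 2) ≤
      ∑ i, ∑ j, (W - U * Matrix.diagonal S * V) i j ^ 2 := by
  intro S
  set A : Matrix (Fin M × Fin N) (Fin K) ℝ := fun p l => U p.1 l * V l p.2 with hA
  set w : Fin M × Fin N → ℝ := fun p => W p.1 p.2 with hw
  -- entries of the residual
  have hent : ∀ (S' : Fin K → ℝ) (i : Fin M) (j : Fin N),
      (W - U * Matrix.diagonal S' * V) i j = w (i, j) - A.mulVec S' (i, j) := by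
    intro S' i j
    simp only [Matrix.sub_apply, hw]
    congr 1
    rw [Matrix.mul_apply]
    simp only [Matrix.mul_diagonal, hA, Matrix.mulVec, dotProduct]
    exact Finset.sum_congr rfl fun l _ => by ring
  -- Gram matrix identity
  have hAG : Aᵀ * A = Matrix.hadamard (Uᵀ * U) (V * Vᵀ) := by
    ext l l'
    simp only [Matrix.mul_apply, Matrix.transpose_apply, Matrix.hadamard_apply]
    simp only [hA]
    rw [Fintype.sum_prod_type, Finset.sum_mul_sum]
    exact Finset.sum_congr rfl fun i _ => Finset.sum_congr rfl fun j _ => by ring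
  -- the target vector
  have hb : (fun l => (Uᵀ * W * Vᵀ) l l) = Aᵀ.mulVec w := by
    funext l
    simp only [Matrix.mulVec, Matrix.mul_apply, Matrix.transpose_apply, dotProduct]
    simp only [hA, hw]
    rw [Fintype.sum_prod_type, Finset.sum_comm]
    refine Finset.sum_congr rfl fun j _ => ?_
    rw [Finset.sum_mul]
    exact Finset.sum_congr rfl fun i _ => by ring
  have hkey : Aᵀ * A * P * Aᵀ = Aᵀ := by
    rw [show Aᵀ * A * P = Matrix.hadamard (Uᵀ * U) (V * Vᵀ) * P by rw [hAG]]
    exact tsvd_aux_key A _ P hAG hP1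
  have hls := tsvd_aux_ls A P w hkey S
  calc ∑ i, ∑ j, (W - U * Matrix.diagonal (P.mulVec fun k => (Uᵀ * W * Vᵀ) k k) * V) i j ^ 2
      = ∑ p : Fin M × Fin N, (w p - A.mulVec (P.mulVec (Aᵀ.mulVec w)) p) ^ 2 := by
        rw [Fintype.sum_prod_type]
        exact Finset.sum_congr rfl fun i _ => Finset.sum_congr rfl fun j _ => by
          rw [hent, hb]
    _ ≤ ∑ p : Fin M × Fin N, (w p - A.mulVec S p) ^ 2 := hls
    _ = ∑ i, ∑ j, (W - U * Matrix.diagonal S * V) i j ^ 2 := by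
        rw [Fintype.sum_prod_type]
        exact Finset.sum_congr rfl fun i _ => Finset.sum_congr rfl fun j _ => by
          rw [hent]
end

section
/- Let $Q$ be the $N\times N$ upper bidiagonal matrix with $1$ on the diagonal and $-1$ on the superdiagonal, and $v = (\sqrt{1},\dots,\sqrt{N})^\top$. Define $f(a) = \|a\|_2 - v^\top Q a$ on $\mathbb{R}^N$. Then $f$ is convex, and $f(a) \leq 0$ for every $a$ in the convex cone $\{a : Qa \geq 0\}$ (entrywise). -/
open Matrix Finset

/-- `f(a) = ‖a‖₂ - vᵀ Q a` is convex and nonpositive on the cone `{a : Qa ≥ 0}`. -/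
theorem f_convex_and_nonpos_on_cone (N : ℕ)
    (Q : Matrix (Fin N) (Fin N) ℝ)
    (hQ : ∀ i j : Fin N, Q i j =
      if (j : ℕ) = (i : ℕ) then 1 else if (j : ℕ) = (i : ℕ) + 1 then -1 else 0) :
    ConvexOn ℝ Set.univ (fun a : Fin N → ℝ =>
      Real.sqrt (∑ i, a i ^ 2) -
        ∑ i : Fin N, Real.sqrt ((i : ℕ) + 1) * Q.mulVec a i) ∧
    (∀ a : Fin N → ℝ, (∀ i, 0 ≤ Q.mulVec a i) →
      Real.sqrt (∑ i, a i ^ 2) -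
        ∑ i : Fin N, Real.sqrt ((i : ℕ) + 1) * Q.mulVec a i ≤ 0) := by
  set L := (WithLp.linearEquiv 2 ℝ (Fin N → ℝ)).symm with hLdef
  have hnorm : ∀ a : Fin N → ℝ,
      ‖L a‖ = Real.sqrt (∑ i, a i ^ 2) := by
    intro a
    rw [EuclideanSpace.norm_eq]
    congr 1
    refine Finset.sum_congr rfl fun i _ => ?_
    have : L a i = a i := rfl
    rw [this, Real.norm_eq_abs, sq_abs]
  have h1 : ConvexOn ℝ (Set.univ : Set (Fin N → ℝ))
      (fun a => Real.sqrt (∑ i, a i ^ 2)) := by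
    have h := (convexOn_univ_norm (E := EuclideanSpace ℝ (Fin N))).comp_linearMap
      L.toLinearMap
    simp only [Set.preimage_univ] at h
    convert h using 1
    any_goals rfl
    funext a
    exact (hnorm a).symm
  have h2 : ConcaveOn ℝ (Set.univ : Set (Fin N → ℝ))
      (fun a => ∑ i : Fin N, Real.sqrt ((i : ℕ) + 1) * Q.mulVec a i) := by
    refine ⟨convex_univ, fun x _ y _ s t hs ht hst => le_of_eq ?_⟩
    simp only [Matrix.mulVec_add, Matrix.mulVec_smul, Pi.add_apply, Pi.smul_apply,
      smul_eq_mul, Finset.mul_sum]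
    rw [← Finset.sum_add_distrib]
    refine Finset.sum_congr rfl fun i _ => ?_
    ring
  refine ⟨h1.sub h2, ?_⟩
  intro a ha
  rw [sub_nonpos]
  set b := Q.mulVec a with hbdef
  set A : ℕ → ℝ := fun n => if h : n < N then a ⟨n, h⟩ else 0 with hA
  have hb : ∀ i : Fin N, b i = A i - A ((i : ℕ) + 1) := by
    intro i
    have step : b i = ∑ j : Fin N, ((if (j : ℕ) = (i : ℕ) then (1:ℝ)
        else if (j : ℕ) = (i : ℕ) + 1 then -1 else 0) * A (j : ℕ)) := by
      rw [hbdef]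
      simp only [Matrix.mulVec, dotProduct]
      refine Finset.sum_congr rfl fun j _ => ?_
      rw [hQ i j]
      congr 1
      simp [hA, j.isLt]
    rw [step, Fin.sum_univ_eq_sum_range
      (fun n => (if n = (i : ℕ) then (1:ℝ) else if n = (i : ℕ) + 1 then -1 else 0) * A n) N]
    have hsplit : ∀ n, (if n = (i : ℕ) then (1:ℝ) else if n = (i : ℕ) + 1 then -1 else 0) * A n
        = (if n = (i : ℕ) then A n else 0) + (if n = (i : ℕ) + 1 then -A n else 0) := by
      intro n
      split_ifs <;> first | ring1 | (exfalso; omega)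
    rw [Finset.sum_congr rfl (fun n _ => hsplit n), Finset.sum_add_distrib,
      Finset.sum_ite_eq' (range N) (i : ℕ) A,
      Finset.sum_ite_eq' (range N) ((i : ℕ) + 1) (fun n => -A n)]
    have hm : ((i : ℕ) ∈ range N) := mem_range.mpr i.isLt
    rw [if_pos hm]
    by_cases h2 : (i : ℕ) + 1 ∈ range N
    · rw [if_pos h2]; ring
    · rw [if_neg h2]
      have : A ((i : ℕ) + 1) = 0 := by
        rw [hA]
        exact dif_neg (by simpa using h2)
      rw [this]; ring
  have key : ∀ i : Fin N, a i = ∑ j : Fin N, b j * (if (i : ℕ) ≤ (j : ℕ) then 1 else 0) := by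
    intro i
    have hterm : ∀ j : Fin N, b j * (if (i : ℕ) ≤ (j : ℕ) then (1:ℝ) else 0)
        = (fun n => if (i : ℕ) ≤ n then A n - A (n + 1) else 0) (j : ℕ) := by
      intro j
      rw [hb j]
      by_cases h : (i : ℕ) ≤ (j : ℕ) <;> simp [h]
    rw [Finset.sum_congr rfl (fun j _ => hterm j),
      Fin.sum_univ_eq_sum_range (fun n => if (i : ℕ) ≤ n then A n - A (n + 1) else 0) N,
      ← Finset.sum_filter]
    have hf : filter (fun n => (i : ℕ) ≤ n) (range N) = Ico (i : ℕ) N := by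
      ext n; simp [Finset.mem_Ico, and_comm]
    rw [hf, Finset.sum_Ico_eq_sub _ (le_of_lt i.isLt), Finset.sum_range_sub' A,
      Finset.sum_range_sub' A]
    have hAN : A N = 0 := dif_neg (lt_irrefl N)
    have hAi : A (i : ℕ) = a i := dif_pos i.isLt
    rw [hAN, hAi]; ring
  -- triangle inequality
  set w : Fin N → (Fin N → ℝ) := fun j => fun i => b j * (if (i : ℕ) ≤ (j : ℕ) then 1 else 0)
    with hw
  have ha_eq : a = ∑ j : Fin N, w j := by
    funext i
    rw [Finset.sum_apply]
    exact key i
  have hwnorm : ∀ j : Fin N, ‖L (w j)‖ = Real.sqrt ((j : ℕ) + 1) * b j := by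
    intro j
    rw [hnorm]
    have hcard : ∑ i : Fin N, (if (i : ℕ) ≤ (j : ℕ) then (1:ℝ) else 0) = (j : ℕ) + 1 := by
      rw [Fin.sum_univ_eq_sum_range (fun n => if n ≤ (j : ℕ) then (1:ℝ) else 0) N,
        Finset.sum_boole]
      have hj := j.isLt
      have : filter (fun n => n ≤ (j : ℕ)) (range N) = range ((j : ℕ) + 1) := by
        ext n
        simp only [Finset.mem_filter, Finset.mem_range, Nat.lt_succ_iff]
        omega
      rw [this, Finset.card_range]
      push_cast; ring
    have hsum : ∑ i : Fin N, w j i ^ 2 = b j ^ 2 * ((j : ℕ) + 1) := by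
      rw [hw]
      simp only [mul_pow]
      rw [← Finset.mul_sum]
      congr 1
      rw [← hcard]
      refine Finset.sum_congr rfl fun i _ => ?_
      split_ifs <;> norm_num
    rw [hsum, Real.sqrt_mul (sq_nonneg _), Real.sqrt_sq (ha j), mul_comm]
  calc Real.sqrt (∑ i, a i ^ 2) = ‖L a‖ := (hnorm a).symm
    _ = ‖∑ j : Fin N, L (w j)‖ := by rw [ha_eq, map_sum]
    _ ≤ ∑ j : Fin N, ‖L (w j)‖ := norm_sum_le _ _
    _ = ∑ i : Fin N, Real.sqrt ((i : ℕ) + 1) * b i := by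
        exact Finset.sum_congr rfl fun j _ => hwnorm j
end

section
/- Let $x \in \mathbb{R}^N$ have coordinates sorted so that $|x[0]| \geq |x[1]| \geq \dots \geq |x[N-1]|$, with $\|x\|_2 = 1$. For each $q \in \{1,\dots,N\}$, let $t_q$ be the ternary vector with $t_q[i] = \mathrm{sign}(x[i])$ for $i < q$ and $t_q[i] = 0$ otherwise. Then the cosine between $x$ and $t_q$ equals $\frac{\sum_{i=0}^{q-1}|x[i]|}{\sqrt{q}}$, and $\max_{1\leq q\leq N} \frac{\sum_{i=0}^{q-1}|x[i]|}{\sqrt{q}} \geq \gamma_N$ where $\gamma_N = \left(\sum_{k=1}^{N}(\sqrt{k}-\sqrt{k-1})^2\right)^{-1/2}$. -/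
open Finset
open scoped Classical

/-- Abel-summation auxiliary lemma: if `a` is nonnegative and decreasing (below `N`),
`D 0 = 0` and `D n ≤ 0` for `1 ≤ n ≤ N`, then the telescoped weighted sum is
bounded by `a (n-1) * D n`. -/
lemma abel_aux (N : ℕ) (a D : ℕ → ℝ) (ha0 : ∀ k, 0 ≤ a k)
    (hmono : ∀ k, k + 1 < N → a (k + 1) ≤ a k) (hD0 : D 0 = 0)
    (hD : ∀ n, 1 ≤ n → n ≤ N → D n ≤ 0) :
    ∀ n, 1 ≤ n → n ≤ N → ∑ k ∈ Finset.range n, a k * (D (k + 1) - D k) ≤ a (n - 1) * D n := by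
  intro n
  induction n with
  | zero => omega
  | succ m ih =>
    intro _ hle
    rcases Nat.eq_zero_or_pos m with hm | hm
    · subst hm
      simp [hD0]
    · have hsum : ∑ k ∈ Finset.range (m + 1), a k * (D (k + 1) - D k)
          = (∑ k ∈ Finset.range m, a k * (D (k + 1) - D k)) + a m * (D (m + 1) - D m) := by
        rw [Finset.sum_range_succ]
      have h1 : ∑ k ∈ Finset.range m, a k * (D (k + 1) - D k) ≤ a (m - 1) * D m :=
        ih hm (by omega)
      have ham : a m ≤ a (m - 1) := by
        have := hmono (m - 1) (by omega)
        have hmm : m - 1 + 1 = m := by omega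
        rwa [hmm] at this
      have hDm : D m ≤ 0 := hD m hm (by omega)
      have : a (m - 1) * D m + a m * (D (m + 1) - D m) ≤ a m * D (m + 1) := by
        have h2 : (a (m - 1) - a m) * D m ≤ 0 :=
          mul_nonpos_of_nonneg_of_nonpos (by linarith) hDm
        nlinarith
      rw [hsum]
      simpa using le_trans (by linarith) this

/-- For a sorted unit vector, the sign-pattern top-`q` ternarizations have
cosine `(∑_{i<q} |x i|)/√q`, and some `q` achieves cosine at least `γ_N`.
Here `sign(x i)` is `1` if `x i ≥ 0` and `-1` otherwise. -/
theorem ternarization_cosine_and_gamma (N : ℕ) (hN : 1 ≤ N) (x : Fin N → ℝ)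
    (hsorted : ∀ i j : Fin N, i ≤ j → |x j| ≤ |x i|)
    (hnorm : ∑ i, x i ^ 2 = 1) :
    (∀ q, 1 ≤ q → q ≤ N →
      (∑ i, x i * (if (i : ℕ) < q then (if 0 ≤ x i then (1 : ℝ) else -1) else 0)) /
          Real.sqrt ((Finset.univ.filter fun i : Fin N =>
            (if (i : ℕ) < q then (if 0 ≤ x i then (1 : ℝ) else -1) else 0) ≠ 0).card) =
        (∑ i : Fin N, if (i : ℕ) < q then |x i| else 0) / Real.sqrt q) ∧
    (∃ q, 1 ≤ q ∧ q ≤ N ∧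
      gamma N ≤ (∑ i : Fin N, if (i : ℕ) < q then |x i| else 0) / Real.sqrt q) := by
  -- a k = |x k| extended by 0
  set a : ℕ → ℝ := fun k => if h : k < N then |x ⟨k, h⟩| else 0 with ha_def
  have ha0 : ∀ k, 0 ≤ a k := by
    intro k
    by_cases h : k < N <;> simp [ha_def, h, abs_nonneg]
  have hmono : ∀ k, k + 1 < N → a (k + 1) ≤ a k := by
    intro k hk
    have hkN : k < N := by omega
    simp only [ha_def, dif_pos hk, dif_pos hkN]
    exact hsorted ⟨k, hkN⟩ ⟨k + 1, hk⟩ (by simp [Fin.le_def])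
  -- the partial sums
  set S : ℕ → ℝ := fun q => ∑ k ∈ Finset.range q, a k with hS_def
  have hS0 : ∀ q, 0 ≤ S q := fun q => Finset.sum_nonneg fun k _ => ha0 k
  -- relate statement sums to S
  have hSq : ∀ q, (∑ i : Fin N, if (i : ℕ) < q then |x i| else 0)
      = ∑ k ∈ Finset.range N, if k < q then a k else 0 := by
    intro q
    rw [← Fin.sum_univ_eq_sum_range (fun k => if k < q then a k else 0) N]
    refine Finset.sum_congr rfl fun i _ => ?_
    simp [ha_def, i.isLt]
  have hSq' : ∀ q, q ≤ N → (∑ i : Fin N, if (i : ℕ) < q then |x i| else 0) = S q := by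
    intro q hq
    rw [hSq, ← Finset.sum_filter]
    have : (Finset.range N).filter (fun k => k < q) = Finset.range q := by
      ext k; simp; omega
    rw [this]
  -- Part 1
  have part1 : ∀ q, 1 ≤ q → q ≤ N →
      (∑ i, x i * (if (i : ℕ) < q then (if 0 ≤ x i then (1 : ℝ) else -1) else 0)) /
          Real.sqrt ((Finset.univ.filter fun i : Fin N =>
            (if (i : ℕ) < q then (if 0 ≤ x i then (1 : ℝ) else -1) else 0) ≠ 0).card) =
        (∑ i : Fin N, if (i : ℕ) < q then |x i| else 0) / Real.sqrt q := by
    intro q _ hqN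
    have hnum : (∑ i, x i * (if (i : ℕ) < q then (if 0 ≤ x i then (1 : ℝ) else -1) else 0))
        = ∑ i : Fin N, if (i : ℕ) < q then |x i| else 0 := by
      refine Finset.sum_congr rfl fun i _ => ?_
      by_cases hi : (i : ℕ) < q
      · by_cases hx : 0 ≤ x i
        · simp [hi, hx, abs_of_nonneg hx]
        · simp [hi, hx, abs_of_neg (lt_of_not_ge hx)]
      · simp [hi]
    have hfilter : (Finset.univ.filter fun i : Fin N =>
        (if (i : ℕ) < q then (if 0 ≤ x i then (1 : ℝ) else -1) else 0) ≠ 0)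
        = Finset.univ.filter fun i : Fin N => (i : ℕ) < q := by
      refine Finset.filter_congr fun i _ => ?_
      by_cases hi : (i : ℕ) < q
      · by_cases hx : 0 ≤ x i <;> simp [hi, hx]
      · simp [hi]
    have hcard : (Finset.univ.filter fun i : Fin N => (i : ℕ) < q).card = q := by
      rw [Finset.card_filter]
      rw [Fin.sum_univ_eq_sum_range (fun k => if k < q then 1 else 0) N]
      rw [← Finset.card_filter]
      have : (Finset.range N).filter (fun k => k < q) = Finset.range q := by
        ext k; simp; omega
      rw [this, Finset.card_range]
    rw [hnum, hfilter, hcard]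
  refine ⟨part1, ?_⟩
  -- Part 2
  -- choose maximizing q
  obtain ⟨q0, hq0mem, hq0max⟩ := Finset.exists_max_image (Finset.Icc 1 N)
    (fun q => S q / Real.sqrt q) ⟨1, by simp [hN]⟩
  obtain ⟨hq01, hq0N⟩ := Finset.mem_Icc.mp hq0mem
  set c : ℝ := S q0 / Real.sqrt q0 with hc_def
  have hc0 : 0 ≤ c := by
    apply div_nonneg (hS0 q0) (Real.sqrt_nonneg _)
  have hSc : ∀ q, 1 ≤ q → q ≤ N → S q ≤ c * Real.sqrt q := by
    intro q h1 h2
    have hmax := hq0max q (Finset.mem_Icc.mpr ⟨h1, h2⟩)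
    have hq0 : (0 : ℝ) < Real.sqrt q := by
      apply Real.sqrt_pos.mpr
      exact_mod_cast h1
    calc S q = (S q / Real.sqrt q) * Real.sqrt q := by field_simp
      _ ≤ c * Real.sqrt q := by
          apply mul_le_mul_of_nonneg_right hmax (le_of_lt hq0)
  -- D function
  set D : ℕ → ℝ := fun n => S n - c * Real.sqrt n with hD_def
  have hD0 : D 0 = 0 := by simp [hD_def, hS_def]
  have hDle : ∀ n, 1 ≤ n → n ≤ N → D n ≤ 0 := by
    intro n h1 h2
    have := hSc n h1 h2
    simp [hD_def]
    linarith
  have habel := abel_aux N a D ha0 hmono hD0 hDle N hN le_rfl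
  have hDN : D N ≤ 0 := hDle N hN le_rfl
  have hfinal : a (N - 1) * D N ≤ 0 :=
    mul_nonpos_of_nonneg_of_nonpos (ha0 _) hDN
  -- expand the telescoped sum
  have hexpand : ∀ k, D (k + 1) - D k
      = a k - c * (Real.sqrt (k + 1) - Real.sqrt k) := by
    intro k
    have : S (k + 1) - S k = a k := by simp [hS_def, Finset.sum_range_succ]
    simp only [hD_def]
    push_cast
    linarith [this]
  have hkey : ∑ k ∈ Finset.range N, a k * (a k - c * (Real.sqrt (k + 1) - Real.sqrt k)) ≤ 0 := by
    calc ∑ k ∈ Finset.range N, a k * (a k - c * (Real.sqrt (k + 1) - Real.sqrt k))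
        = ∑ k ∈ Finset.range N, a k * (D (k + 1) - D k) := by
          refine Finset.sum_congr rfl fun k _ => ?_
          rw [hexpand k]
      _ ≤ a (N - 1) * D N := habel
      _ ≤ 0 := hfinal
  -- norm
  have hnorm' : ∑ k ∈ Finset.range N, (a k) ^ 2 = 1 := by
    rw [← Fin.sum_univ_eq_sum_range (fun k => (a k) ^ 2) N]
    rw [← hnorm]
    refine Finset.sum_congr rfl fun i _ => ?_
    simp [ha_def, i.isLt, sq_abs]
  -- so 1 ≤ c * ∑ a k * b k
  set b : ℕ → ℝ := fun k => Real.sqrt (k + 1) - Real.sqrt k with hb_def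
  have hb0 : ∀ k, 0 ≤ b k := by
    intro k
    have : Real.sqrt k ≤ Real.sqrt (k + 1) := by
      apply Real.sqrt_le_sqrt; push_cast; linarith
    simp [hb_def]; linarith
  have h1le : 1 ≤ c * ∑ k ∈ Finset.range N, a k * b k := by
    have : ∑ k ∈ Finset.range N, (a k) ^ 2
        ≤ ∑ k ∈ Finset.range N, a k * (c * b k) := by
      have := hkey
      have hrw : ∑ k ∈ Finset.range N, a k * (a k - c * b k)
          = (∑ k ∈ Finset.range N, (a k) ^ 2) - ∑ k ∈ Finset.range N, a k * (c * b k) := by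
        rw [← Finset.sum_sub_distrib]
        refine Finset.sum_congr rfl fun k _ => by ring
      rw [hrw] at this
      linarith
    rw [hnorm'] at this
    calc (1 : ℝ) ≤ ∑ k ∈ Finset.range N, a k * (c * b k) := this
      _ = c * ∑ k ∈ Finset.range N, a k * b k := by
          rw [Finset.mul_sum]
          refine Finset.sum_congr rfl fun k _ => by ring
  -- Cauchy–Schwarz
  set Γsq : ℝ := ∑ k ∈ Finset.range N, (b k) ^ 2 with hΓsq_def
  have hΓsq_pos : 0 < Γsq := by
    have h0mem : 0 ∈ Finset.range N := Finset.mem_range.mpr (by omega)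
    have hterm : (b 0) ^ 2 = 1 := by
      simp [hb_def]
    have hle : (b 0) ^ 2 ≤ Γsq :=
      Finset.single_le_sum (f := fun k => (b k) ^ 2) (fun k _ => sq_nonneg _) h0mem
    rw [hterm] at hle
    linarith
  have hCS : ∑ k ∈ Finset.range N, a k * b k ≤ Real.sqrt Γsq := by
    have hcs := Finset.sum_mul_sq_le_sq_mul_sq (Finset.range N) a b
    rw [hnorm', one_mul] at hcs
    have hsum0 : 0 ≤ ∑ k ∈ Finset.range N, a k * b k :=
      Finset.sum_nonneg fun k _ => mul_nonneg (ha0 k) (hb0 k)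
    exact (Real.le_sqrt hsum0 (le_of_lt hΓsq_pos)).mpr hcs
  have hΓpos : 0 < Real.sqrt Γsq := Real.sqrt_pos.mpr hΓsq_pos
  have h1leΓ : 1 ≤ c * Real.sqrt Γsq := by
    calc (1 : ℝ) ≤ c * ∑ k ∈ Finset.range N, a k * b k := h1le
      _ ≤ c * Real.sqrt Γsq := mul_le_mul_of_nonneg_left hCS hc0
  have hgamma : gamma N ≤ c := by
    have hgamma_eq : gamma N = 1 / Real.sqrt Γsq := by
      simp only [gamma, hΓsq_def, hb_def]
    rw [hgamma_eq, div_le_iff₀ hΓpos]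
    linarith
  exact ⟨q0, hq01, hq0N, by rw [hSq' q0 hq0N]; exact hgamma⟩
end
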